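/- For real c ≥ 1 and real k, the symbol difference satisfies |e^{iξ(c²−c√(c²+k²))} − e^{−iξ k²/2}| ≤ |ξ| · k⁴/(8c²) for all real ξ. -/

import Mathlib

open Complex Real

lemma exp_I_sub_le (x y : ℝ) :
    ‖Complex.exp (Complex.I * x) - Complex.exp (Complex.I * y)‖ ≤ |x - y| := by
  have h : Complex.exp (Complex.I * x) - Complex.exp (Complex.I * y)
      = Complex.exp (Complex.I * y) * (Complex.exp (Complex.I * (x - y)) - 1) := by
    rw [mul_sub, ← Complex.exp_add, mul_one]
    ring_nf
  rw [h, norm_mul]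
  have habs : ‖Complex.exp (Complex.I * y)‖ = 1 := by
    rw [mul_comm]; exact Complex.norm_exp_ofReal_mul_I y
  rw [habs, one_mul]
  set t := x - y with ht
  have h2 : Complex.exp (Complex.I * t) - 1
      = Complex.mk (Real.cos t - 1) (Real.sin t) := by
    rw [mul_comm, Complex.exp_mul_I, ← Complex.ofReal_cos, ← Complex.ofReal_sin]
    apply Complex.ext <;> simp [Complex.cos_ofReal_re, Complex.sin_ofReal_re]
  rw [show ((x:ℂ) - y) = (t:ℂ) by norm_cast, h2]
  have h3 : ‖Complex.mk (Real.cos t - 1) (Real.sin t)‖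
      = Real.sqrt ((Real.cos t - 1)^2 + (Real.sin t)^2) := by
    rw [Complex.norm_def, Complex.normSq_mk]; ring_nf
  rw [h3]
  have h4 : (Real.cos t - 1)^2 + (Real.sin t)^2 = 4 * (Real.sin (t/2))^2 := by
    have hs := Real.sin_sq_eq_half_sub (t/2)
    rw [show 2*(t/2) = t by ring] at hs
    nlinarith [Real.sin_sq_add_cos_sq t]
  rw [h4]
  have h5 : Real.sqrt (4 * (Real.sin (t/2))^2) = 2 * |Real.sin (t/2)| := by
    rw [show (4:ℝ) * (Real.sin (t/2))^2 = (2*|Real.sin (t/2)|)^2 by rw [mul_pow]; rw [_root_.sq_abs]; ring]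
    exact Real.sqrt_sq (by positivity)
  rw [h5]
  calc 2 * |Real.sin (t/2)| ≤ 2 * |t/2| := by
        linarith [Real.abs_sin_le_abs (x := t/2)]
    _ = |t| := by rw [abs_div]; simp; ring

/-- Refined symbol expansion: for `c ≥ 1` and real `k`,
`|e^{iξ(c²−c√(c²+k²))} − e^{−iξk²/2}| ≤ |ξ|·k⁴/(8c²)` for all real `ξ`. -/
theorem symbol_exp_refined_bound (c k ξ : ℝ) (hc : 1 ≤ c) :
    ‖Complex.exp (Complex.I * ξ * (c ^ 2 - c * Real.sqrt (c ^ 2 + k ^ 2))) -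
          Complex.exp (-Complex.I * ξ * (k ^ 2 / 2))‖ ≤
      |ξ| * k ^ 4 / (8 * c ^ 2) := by
  have hc0 : (0:ℝ) < c := lt_of_lt_of_le one_pos hc
  set s := Real.sqrt (c^2 + k^2) with hs
  have hs0 : 0 ≤ s := Real.sqrt_nonneg _
  have hs2 : s^2 = c^2 + k^2 := Real.sq_sqrt (by positivity)
  have hsc : c ≤ s := by nlinarith
  have key : |c^2 - c*s + k^2/2| ≤ k^4/(8*c^2) := by
    have h1 : c*s ≤ c^2 + k^2/2 := by nlinarith
    have hY : 2*c^2 ≤ c^2+k^2/2+c*s := by nlinarith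
    have hX : (0:ℝ) ≤ c^2+k^2/2 - c*s := by linarith
    have h2 : c^2 + k^2/2 - c*s ≤ k^4/(8*c^2) := by
      rw [le_div_iff₀ (by positivity)]
      nlinarith [mul_le_mul_of_nonneg_left hY hX]
    rw [_root_.abs_of_nonneg (by linarith)]
    linarith
  have e1 : Complex.I * ξ * ((c:ℂ)^2 - c*s) = Complex.I * ((ξ*(c^2 - c*s) : ℝ) : ℂ) := by
    push_cast; ring
  have e2 : -Complex.I * ξ * ((k:ℂ)^2/2) = Complex.I * ((-(ξ*(k^2/2)) : ℝ) : ℂ) := by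
    push_cast; ring
  rw [e1, e2]
  calc ‖Complex.exp (Complex.I * ((ξ*(c^2 - c*s) : ℝ) : ℂ)) -
          Complex.exp (Complex.I * ((-(ξ*(k^2/2)) : ℝ) : ℂ))‖
      ≤ |ξ*(c^2 - c*s) - (-(ξ*(k^2/2)))| := exp_I_sub_le _ _
    _ = |ξ| * |c^2 - c*s + k^2/2| := by rw [← abs_mul]; ring_nf
    _ ≤ |ξ| * (k^4/(8*c^2)) := mul_le_mul_of_nonneg_left key (abs_nonneg _)
    _ = |ξ| * k^4/(8*c^2) := by ring
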